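/- Fix n ≥ 1, γ ∈ ℝ^{k+1}, and a bound M > 0. Let x_1, …, x_n ∈ ℝ^k be fixed presence covariates and let x_{n+1}, x_{n+2}, … ∈ ℝ^k be an infinite sequence of pseudo-absence covariates, all with ‖x_i‖ ≤ M. For each m > n, form l_bin(γ; m) from the points 1, …, m and form l_ppm(γ − J_m; 1) with all m weights equal to 1. Then there exist a constant C > 0 and m_0 such that for all m ≥ m_0, |l_bin(γ; m) − l_ppm(γ − J_m; 1)| ≤ C/m; that is, the logistic regression log-likelihood equals the unit-weight Poisson point-process log-likelihood evaluated at γ − J_m, up to an error of order O(m^{-1}). -/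

import Mathlib

open Real Finset Filter

noncomputable section

/-- The intensity `λ_i(β) = exp(β_0 + Σ_{j=1}^k x_{ij} β_j)`. -/
def lam {k : ℕ} (x : ℕ → Fin k → ℝ) (β : Fin (k + 1) → ℝ) (i : ℕ) : ℝ :=
  Real.exp (β 0 + ∑ j : Fin k, x i j * β j.succ)

/-- The weighted Poisson point-process log-likelihood
`l_ppm(β; w) = Σ_{i=1}^n log λ_i(β) − Σ_{i=1}^m w_i λ_i(β)`
(points are indexed `0, …, m-1`, the presences being `0, …, n-1`). -/
def lppm {k : ℕ} (n m : ℕ) (x : ℕ → Fin k → ℝ) (w : ℕ → ℝ) (β : Fin (k + 1) → ℝ) : ℝ :=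
  (∑ i ∈ Finset.range n, Real.log (lam x β i)) - ∑ i ∈ Finset.range m, w i * lam x β i

/-- The vector `J_c = (log c, 0, …, 0) ∈ ℝ^{k+1}`. -/
def Jvec {k : ℕ} (c : ℝ) : Fin (k + 1) → ℝ := fun j => if j = 0 then Real.log c else 0

/-- Per-term estimate: `|a/m - log(1 + a/(m-nn))| ≤ (2·B·nn + 4·B²)/m²`. -/
lemma aux_term (a B nn m : ℝ) (ha0 : 0 < a) (haB : a ≤ B) (hnn : 0 ≤ nn) (hm : 0 < m)
    (hhalf : m/2 ≤ m - nn) :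
    |a/m - Real.log (1 + a/(m-nn))| ≤ (2*B*nn + 4*B^2)/m^2 := by
  have hc : (0:ℝ) < m - nn := lt_of_lt_of_le (by linarith) hhalf
  have hB0 : 0 < B := lt_of_lt_of_le ha0 haB
  set r := a/(m-nn) with hr
  have hr0 : 0 < r := by positivity
  have h1r : (0:ℝ) < 1 + r := by linarith
  have hup : Real.log (1+r) ≤ r := by
    have := Real.log_le_sub_one_of_pos h1r; linarith
  have hlow : r - r^2 ≤ Real.log (1+r) := by
    have h2 := Real.log_le_sub_one_of_pos (show (0:ℝ) < (1+r)⁻¹ by positivity)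
    rw [Real.log_inv] at h2
    have h3 : (1+r)⁻¹ - 1 = -(r/(1+r)) := by field_simp; ring
    rw [h3] at h2
    have h4 : r - r^2 ≤ r/(1+r) := by
      rw [le_div_iff₀ h1r]; nlinarith
    linarith
  have hrB : r ≤ 2*B/m := by
    rw [hr, div_le_div_iff₀ hc hm]; nlinarith
  have hr2 : r^2 ≤ 4*B^2/m^2 := by
    calc r^2 ≤ (2*B/m)^2 := by nlinarith
      _ = 4*B^2/m^2 := by ring
  have hdiff : r - a/m ≤ 2*B*nn/m^2 := by
    have he : r - a/m = a*nn/(m*(m-nn)) := by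
      rw [hr]; field_simp; ring
    rw [he, div_le_div_iff₀ (by positivity) (by positivity)]
    have h1 : a*(nn*m^2) ≤ B*(nn*m^2) :=
      mul_le_mul_of_nonneg_right haB (by positivity)
    have h2 : m*(m/2) ≤ m*(m-nn) := mul_le_mul_of_nonneg_left hhalf hm.le
    nlinarith [mul_nonneg hB0.le hnn]
  have hdiff0 : a/m ≤ r := by
    rw [hr, div_le_div_iff₀ hm hc]; nlinarith
  have hsplit : (2*B*nn + 4*B^2)/m^2 = 2*B*nn/m^2 + 4*B^2/m^2 := by ring
  rw [abs_le]
  constructor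
  · have h4 : (0:ℝ) ≤ 4*B^2/m^2 := by positivity
    linarith
  · have h2 : (0:ℝ) ≤ 2*B*nn/m^2 := by positivity
    linarith

/-- Theorem 1 of Warton & Shepherd (2010): with `n` fixed presence covariates and an
infinite sequence of pseudo-absence covariates, all bounded in norm by `M`, the
pseudo-absence logistic log-likelihood
`l_bin(γ; m) = Σ_{i=1}^n log p_i + Σ_{i=n+1}^m log(1 − p_i)`
(where `log(p_i/(1−p_i)) = γ_0 − log(m−n) + Σ_j x_{ij} γ_j`) equals the unit-weight
Poisson point-process log-likelihood `l_ppm(γ − J_m; 1)` up to an error of order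
`O(m^{-1})`: there are `C > 0` and `m₀` with
`|l_bin(γ; m) − l_ppm(γ − J_m; 1)| ≤ C/m` for all `m ≥ m₀`. -/
theorem stmt_0 {k : ℕ} (n : ℕ) (hn : 1 ≤ n) (γ : Fin (k + 1) → ℝ) (M : ℝ) (hM : 0 < M)
    (x : ℕ → Fin k → ℝ) (hx : ∀ i, ‖x i‖ ≤ M)
    (p : ℕ → ℕ → ℝ)
    (hp01 : ∀ m, n < m → ∀ i < m, p m i ∈ Set.Ioo (0 : ℝ) 1)
    (hlogit : ∀ m, n < m → ∀ i < m,
      Real.log (p m i / (1 - p m i)) =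
        γ 0 - Real.log ((m : ℝ) - n) + ∑ j : Fin k, x i j * γ j.succ) :
    ∃ C > (0 : ℝ), ∃ m₀ : ℕ, n < m₀ ∧ ∀ m ≥ m₀,
      |((∑ i ∈ Finset.range n, Real.log (p m i)) +
            ∑ i ∈ Finset.Ico n m, Real.log (1 - p m i)) -
          lppm n m x (fun _ => 1) (γ - Jvec (m : ℝ))| ≤ C / m := by
  classical
  set η : ℕ → ℝ := fun i => γ 0 + ∑ j : Fin k, x i j * γ j.succ with hη
  set B : ℝ := Real.exp (|γ 0| + M * ∑ j : Fin k, |γ j.succ|) with hBdef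
  have hB0 : 0 < B := Real.exp_pos _
  have haB : ∀ i, Real.exp (η i) ≤ B := by
    intro i
    rw [hBdef]
    apply Real.exp_le_exp.2
    have h1 : ∑ j : Fin k, x i j * γ j.succ ≤ M * ∑ j : Fin k, |γ j.succ| := by
      rw [Finset.mul_sum]
      refine Finset.sum_le_sum fun j _ => ?_
      calc x i j * γ j.succ ≤ |x i j * γ j.succ| := le_abs_self _
        _ = |x i j| * |γ j.succ| := abs_mul _ _
        _ ≤ M * |γ j.succ| :=
            mul_le_mul_of_nonneg_right ((norm_le_pi_norm (x i) j).trans (hx i)) (abs_nonneg _)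
    simp only [hη]
    have := le_abs_self (γ 0)
    linarith
  refine ⟨2*(n:ℝ)^2 + 2*B*n + 4*B^2 + 1, by positivity, 2*n+1, by omega, ?_⟩
  intro m hm
  have hnm : n < m := by omega
  have hm0 : (0:ℝ) < m := by
    have : 0 < m := by omega
    exact_mod_cast this
  have hmn : (0:ℝ) < (m:ℝ) - n := by
    have : (n:ℝ) < m := by exact_mod_cast hnm
    linarith
  have hhalf : (m:ℝ)/2 ≤ (m:ℝ) - n := by
    have h2 : ((2*n : ℕ):ℝ) ≤ (m:ℝ) := by exact_mod_cast (by omega : 2*n ≤ m)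
    push_cast at h2
    linarith
  have hkey : ∀ i < m,
      Real.log (p m i) = η i - Real.log ((m:ℝ)-n)
        - Real.log (1 + Real.exp (η i)/((m:ℝ)-n))
      ∧ Real.log (1 - p m i) = - Real.log (1 + Real.exp (η i)/((m:ℝ)-n)) := by
    intro i hi
    obtain ⟨hp0, hp1⟩ := hp01 m hnm i hi
    set q := p m i with hq
    have hq1 : 0 < 1 - q := by linarith
    set r := Real.exp (η i)/((m:ℝ)-n) with hrdef
    have hr0 : 0 < r := by positivity
    have h1r : (0:ℝ) < 1 + r := by linarith
    have hratio : q / (1 - q) = r := by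
      have h2 : q/(1-q) = Real.exp (Real.log (q/(1-q))) := (Real.exp_log (by positivity)).symm
      rw [h2, hlogit m hnm i hi,
        show γ 0 - Real.log ((m:ℝ)-n) + ∑ j : Fin k, x i j * γ j.succ
          = η i - Real.log ((m:ℝ)-n) by simp only [hη]; ring,
        Real.exp_sub, Real.exp_log hmn, hrdef]
    have hqr : q = r * (1 - q) := by
      rw [← hratio]; field_simp
    have hqeq : q = r / (1 + r) := by
      rw [eq_div_iff (ne_of_gt h1r)]; linear_combination hqr
    have h1q : 1 - q = 1 / (1 + r) := by
      rw [hqeq]; field_simp; ring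
    constructor
    · rw [hqeq, Real.log_div (ne_of_gt hr0) (ne_of_gt h1r), hrdef,
        Real.log_div (Real.exp_ne_zero _) (ne_of_gt hmn), Real.log_exp]
    · rw [h1q, Real.log_div one_ne_zero (ne_of_gt h1r), Real.log_one, zero_sub]
  have hs1 : ∑ i ∈ Finset.range n, Real.log (p m i)
      = ∑ i ∈ Finset.range n, (η i - Real.log ((m:ℝ)-n)
          - Real.log (1 + Real.exp (η i)/((m:ℝ)-n))) :=
    Finset.sum_congr rfl fun i hi =>
      (hkey i (lt_trans (Finset.mem_range.1 hi) hnm)).1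
  have hs2 : ∑ i ∈ Finset.Ico n m, Real.log (1 - p m i)
      = ∑ i ∈ Finset.Ico n m, (-(Real.log (1 + Real.exp (η i)/((m:ℝ)-n)))) :=
    Finset.sum_congr rfl fun i hi => (hkey i (Finset.mem_Ico.1 hi).2).2
  have hlam : ∀ i, lam x (γ - Jvec (m:ℝ)) i = Real.exp (η i) / m := by
    intro i
    have h0 : (γ - Jvec (k := k) (m:ℝ)) 0 = γ 0 - Real.log m := by
      simp [Jvec, Pi.sub_apply]
    have hsucc : ∀ j : Fin k, (γ - Jvec (k := k) (m:ℝ)) j.succ = γ j.succ := by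
      intro j; simp [Jvec, Pi.sub_apply, Fin.succ_ne_zero j]
    simp only [lam, h0, hsucc]
    rw [show γ 0 - Real.log (m:ℝ) + ∑ j : Fin k, x i j * γ j.succ
        = η i - Real.log (m:ℝ) by simp only [hη]; ring,
      Real.exp_sub, Real.exp_log hm0]
  have hloglam : ∀ i, Real.log (lam x (γ - Jvec (m:ℝ)) i) = η i - Real.log m := by
    intro i
    rw [hlam i, Real.log_div (Real.exp_ne_zero _) (ne_of_gt hm0), Real.log_exp]
  have hD : ((∑ i ∈ Finset.range n, Real.log (p m i)) +
        ∑ i ∈ Finset.Ico n m, Real.log (1 - p m i)) -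
        lppm n m x (fun _ => 1) (γ - Jvec (m : ℝ))
      = (∑ _i ∈ Finset.range n, (Real.log (m:ℝ) - Real.log ((m:ℝ)-n)))
        + ∑ i ∈ Finset.range m,
            (Real.exp (η i)/(m:ℝ) - Real.log (1 + Real.exp (η i)/((m:ℝ)-n))) := by
    have e1 : lppm n m x (fun _ => 1) (γ - Jvec (m : ℝ))
        = (∑ i ∈ Finset.range n, (η i - Real.log (m:ℝ)))
          - ∑ i ∈ Finset.range m, Real.exp (η i)/(m:ℝ) := by
      unfold lppm
      congr 1
      · exact Finset.sum_congr rfl fun i _ => hloglam i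
      · exact Finset.sum_congr rfl fun i _ => by rw [one_mul, hlam i]
    rw [hs1, hs2, e1,
      ← Finset.sum_range_add_sum_Ico
        (fun i => Real.exp (η i)/(m:ℝ) - Real.log (1 + Real.exp (η i)/((m:ℝ)-n))) hnm.le,
      ← Finset.sum_range_add_sum_Ico (fun i => Real.exp (η i)/(m:ℝ)) hnm.le]
    simp only [Finset.sum_sub_distrib, Finset.sum_neg_distrib]
    ring
  rw [hD]
  have hb1 : |∑ _i ∈ Finset.range n, (Real.log (m:ℝ) - Real.log ((m:ℝ)-n))|
      ≤ 2*(n:ℝ)^2/m := by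
    rw [Finset.sum_const, Finset.card_range, nsmul_eq_mul]
    have hc0 : 0 ≤ Real.log (m:ℝ) - Real.log ((m:ℝ)-n) := by
      have := (Real.log_le_log_iff hmn hm0).2 (by linarith : (m:ℝ)-n ≤ m)
      linarith
    have hcu : Real.log (m:ℝ) - Real.log ((m:ℝ)-n) ≤ 2*(n:ℝ)/m := by
      rw [← Real.log_div (ne_of_gt hm0) (ne_of_gt hmn)]
      have h5 := Real.log_le_sub_one_of_pos (show (0:ℝ) < (m:ℝ)/((m:ℝ)-n) by positivity)
      have h6 : (m:ℝ)/((m:ℝ)-n) - 1 ≤ 2*(n:ℝ)/m := by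
        rw [div_sub_one (ne_of_gt hmn), div_le_div_iff₀ hmn hm0]
        have hn0 : (0:ℝ) ≤ (n:ℝ) := Nat.cast_nonneg n
        nlinarith
      linarith
    rw [abs_of_nonneg (mul_nonneg (Nat.cast_nonneg n) hc0)]
    calc (n:ℝ) * (Real.log (m:ℝ) - Real.log ((m:ℝ)-n)) ≤ (n:ℝ) * (2*(n:ℝ)/m) :=
          mul_le_mul_of_nonneg_left hcu (Nat.cast_nonneg n)
      _ = 2*(n:ℝ)^2/m := by ring
  have hb2 : |∑ i ∈ Finset.range m,
        (Real.exp (η i)/(m:ℝ) - Real.log (1 + Real.exp (η i)/((m:ℝ)-n)))|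
      ≤ (2*B*(n:ℝ) + 4*B^2)/m := by
    calc |∑ i ∈ Finset.range m,
          (Real.exp (η i)/(m:ℝ) - Real.log (1 + Real.exp (η i)/((m:ℝ)-n)))|
        ≤ ∑ i ∈ Finset.range m,
            |Real.exp (η i)/(m:ℝ) - Real.log (1 + Real.exp (η i)/((m:ℝ)-n))| :=
          Finset.abs_sum_le_sum_abs _ _
      _ ≤ ∑ _i ∈ Finset.range m, (2*B*(n:ℝ) + 4*B^2)/(m:ℝ)^2 :=
          Finset.sum_le_sum fun i _ =>
            aux_term (Real.exp (η i)) B (n:ℝ) (m:ℝ) (Real.exp_pos _) (haB i)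
              (Nat.cast_nonneg n) hm0 hhalf
      _ = (m:ℝ) * ((2*B*(n:ℝ) + 4*B^2)/(m:ℝ)^2) := by
          rw [Finset.sum_const, Finset.card_range, nsmul_eq_mul]
      _ = (2*B*(n:ℝ) + 4*B^2)/m := by
          field_simp
  calc |(∑ _i ∈ Finset.range n, (Real.log (m:ℝ) - Real.log ((m:ℝ)-n)))
        + ∑ i ∈ Finset.range m,
            (Real.exp (η i)/(m:ℝ) - Real.log (1 + Real.exp (η i)/((m:ℝ)-n)))|
      ≤ |∑ _i ∈ Finset.range n, (Real.log (m:ℝ) - Real.log ((m:ℝ)-n))|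
        + |∑ i ∈ Finset.range m,
            (Real.exp (η i)/(m:ℝ) - Real.log (1 + Real.exp (η i)/((m:ℝ)-n)))| :=
        abs_add_le _ _
    _ ≤ 2*(n:ℝ)^2/m + (2*B*(n:ℝ) + 4*B^2)/m := add_le_add hb1 hb2
    _ ≤ (2*(n:ℝ)^2 + 2*B*n + 4*B^2 + 1)/m := by
        rw [← add_div]
        have hnum : 2*(n:ℝ)^2 + (2*B*(n:ℝ) + 4*B^2)
            ≤ 2*(n:ℝ)^2 + 2*B*n + 4*B^2 + 1 := by linarith
        exact div_le_div_of_nonneg_right hnum hm0.le
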